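/- Fix an integer m ≥ 1 and set N = 2^{m−1}. Let b, c, B be independent random variables with b uniform on {0,1,…,N−1}, c uniform on {1,…,N}, and B Bernoulli(1/2) on {0,1}, and define the integration time index i = (b + c)·B + (b − N + 1 − c)·(1 − B). Then for every integer k, P[i = k] = (1/(2N²))·min(|k|, 2N − |k|) if 1 ≤ |k| ≤ 2N − 1, and P[i = k] = 0 otherwise; in particular i follows a symmetric discrete triangular law on {1−2N,…,2N−1}. -/

import Mathlib

open MeasureTheory
open scoped ENNReal

lemma ennreal_endgame (n Nt : ℕ) (hNt : 0 < Nt) :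
    (n : ℝ≥0∞) * (1 / (Nt : ℝ≥0∞) * (1 / (Nt : ℝ≥0∞)) * (1 / 2)) =
      ENNReal.ofReal ((n : ℝ) / (2 * (Nt : ℝ) ^ 2)) := by
  have ha0 : (Nt : ℝ≥0∞) ≠ 0 := by exact_mod_cast hNt.ne'
  have hat : (Nt : ℝ≥0∞) ≠ ⊤ := ENNReal.natCast_ne_top Nt
  have hpos : (0:ℝ) < 2 * (Nt : ℝ) ^ 2 := by positivity
  rw [ENNReal.ofReal_div_of_pos hpos, ENNReal.ofReal_natCast]
  have h2 : (2 * (Nt:ℝ)^2) = ((2 * Nt^2 : ℕ) : ℝ) := by push_cast; ring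
  rw [h2, ENNReal.ofReal_natCast]
  have h3 : ((2 * Nt^2 : ℕ) : ℝ≥0∞) = (Nt : ℝ≥0∞) * (Nt : ℝ≥0∞) * 2 := by push_cast; ring
  rw [h3]
  have hinv : ((Nt:ℝ≥0∞) * (Nt:ℝ≥0∞) * 2)⁻¹ = (Nt:ℝ≥0∞)⁻¹ * (Nt:ℝ≥0∞)⁻¹ * 2⁻¹ := by
    rw [ENNReal.mul_inv (Or.inr (by norm_num)) (Or.inr (by norm_num)),
      ENNReal.mul_inv (Or.inl ha0) (Or.inl hat)]
  conv_rhs => rw [div_eq_mul_inv, hinv]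
  simp only [one_div]


/-- The integration time index in exact biased progressive HMC with `m` doublings follows
the symmetric discrete triangular law on `{1-2N, …, 2N-1}`, where `N = 2^(m-1)`:
`P[i = k] = (1/(2N²)) · min(|k|, 2N - |k|)` for `1 ≤ |k| ≤ 2N - 1` and `0` otherwise. -/
theorem exact_bphmc_index_triangular_law
    (m : ℕ) (hm : 1 ≤ m) (N : ℤ) (hN : N = 2 ^ (m - 1))
    {Ω : Type*} [MeasurableSpace Ω] (P : Measure Ω) [IsProbabilityMeasure P]
    (b c B : Ω → ℤ) (hb : Measurable b) (hc : Measurable c) (hB : Measurable B)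
    -- b is uniform on {0, 1, …, N-1}
    (hbUnif : ∀ x : ℤ, P {ω | b ω = x} =
      if 0 ≤ x ∧ x ≤ N - 1 then (1 : ℝ≥0∞) / (N.toNat : ℝ≥0∞) else 0)
    -- c is uniform on {1, …, N}
    (hcUnif : ∀ x : ℤ, P {ω | c ω = x} =
      if 1 ≤ x ∧ x ≤ N then (1 : ℝ≥0∞) / (N.toNat : ℝ≥0∞) else 0)
    -- B is Bernoulli(1/2) on {0, 1}
    (hBUnif : ∀ x : ℤ, P {ω | B ω = x} =
      if x = 0 ∨ x = 1 then (1 : ℝ≥0∞) / 2 else 0)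
    -- b, c, B are independent
    (hIndep : ∀ x y z : ℤ, P {ω | b ω = x ∧ c ω = y ∧ B ω = z} =
      P {ω | b ω = x} * P {ω | c ω = y} * P {ω | B ω = z})
    (i : Ω → ℤ)
    (hi : ∀ ω, i ω = (b ω + c ω) * B ω + (b ω - N + 1 - c ω) * (1 - B ω)) :
    ∀ k : ℤ, P {ω | i ω = k} =
      if 1 ≤ |k| ∧ |k| ≤ 2 * N - 1 then
        ENNReal.ofReal ((1 / (2 * (N : ℝ) ^ 2)) * min ((|k| : ℤ) : ℝ) (2 * (N : ℝ) - ((|k| : ℤ) : ℝ)))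
      else 0 := by
  intro k
  have hN0 : 0 < N := hN ▸ pow_pos (by norm_num) _
  set u : ℝ≥0∞ := 1 / (N.toNat : ℝ≥0∞) with hu
  -- measurability of the triple-atom sets
  have hmeas : ∀ x y z : ℤ, MeasurableSet {ω | b ω = x ∧ c ω = y ∧ B ω = z} := by
    intro x y z
    exact (hb (measurableSet_singleton x)).inter
      ((hc (measurableSet_singleton y)).inter (hB (measurableSet_singleton z)))
  have hmB0 : MeasurableSet {ω | B ω = 0} := hB (measurableSet_singleton 0)
  have hmB1 : MeasurableSet {ω | B ω = 1} := hB (measurableSet_singleton 1)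
  have hdisjB : Disjoint {ω | B ω = 0} {ω | B ω = 1} := by
    rw [Set.disjoint_left]
    rintro ω h0 h1
    simp only [Set.mem_setOf_eq] at h0 h1
    omega
  have hBfull : P ({ω | B ω = 0} ∪ {ω | B ω = 1}) = 1 := by
    rw [measure_union hdisjB hmB1, hBUnif 0, hBUnif 1, if_pos (Or.inl rfl), if_pos (Or.inr rfl)]
    exact ENNReal.add_halves 1
  have hBcompl : P ({ω | B ω = 0} ∪ {ω | B ω = 1})ᶜ = 0 := by
    rw [measure_compl (hmB0.union hmB1) (measure_ne_top P _), hBfull, measure_univ, tsub_self]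
  have hmi : MeasurableSet {ω | i ω = k} := by
    have hieq : i = fun ω => (b ω + c ω) * B ω + (b ω - N + 1 - c ω) * (1 - B ω) := funext hi
    have : Measurable i := by
      rw [hieq]
      exact ((hb.add hc).mul hB).add
        ((((hb.sub measurable_const).add measurable_const).sub hc).mul (measurable_const.sub hB))
    exact this (measurableSet_singleton k)
  -- split over the value of B
  have hsplit : P {ω | i ω = k} =
      P ({ω | i ω = k} ∩ {ω | B ω = 1}) + P ({ω | i ω = k} ∩ {ω | B ω = 0}) := by
    calc P {ω | i ω = k} = P ({ω | i ω = k} ∩ ({ω | B ω = 0} ∪ {ω | B ω = 1})) :=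
          (measure_inter_conull hBcompl).symm
      _ = P (({ω | i ω = k} ∩ {ω | B ω = 0}) ∪ ({ω | i ω = k} ∩ {ω | B ω = 1})) := by
          rw [Set.inter_union_distrib_left]
      _ = P ({ω | i ω = k} ∩ {ω | B ω = 0}) + P ({ω | i ω = k} ∩ {ω | B ω = 1}) :=
          measure_union (hdisjB.mono Set.inter_subset_right Set.inter_subset_right)
            (hmi.inter hmB1)
      _ = _ := add_comm _ _
  -- branch set identifications
  have hset1 : {ω | i ω = k} ∩ {ω | B ω = 1} =
      ⋃ x : ℤ, {ω | b ω = x ∧ c ω = k - x ∧ B ω = 1} := by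
    ext ω
    simp only [Set.mem_inter_iff, Set.mem_iUnion, Set.mem_setOf_eq, hi ω]
    constructor
    · rintro ⟨hik, hB1⟩
      rw [hB1] at hik
      refine ⟨b ω, rfl, ?_, hB1⟩
      simp only [mul_one, sub_self, mul_zero, add_zero] at hik
      omega
    · rintro ⟨x, hbx, hcx, hB1⟩
      exact ⟨by rw [hbx, hcx, hB1]; ring, hB1⟩
  have hset0 : {ω | i ω = k} ∩ {ω | B ω = 0} =
      ⋃ x : ℤ, {ω | b ω = x ∧ c ω = x - N + 1 - k ∧ B ω = 0} := by
    ext ω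
    simp only [Set.mem_inter_iff, Set.mem_iUnion, Set.mem_setOf_eq, hi ω]
    constructor
    · rintro ⟨hik, hB0⟩
      rw [hB0] at hik
      refine ⟨b ω, rfl, ?_, hB0⟩
      simp only [mul_zero, zero_add, sub_zero, mul_one] at hik
      omega
    · rintro ⟨x, hbx, hcx, hB0⟩
      refine ⟨?_, hB0⟩
      rw [hbx, hcx, hB0]; ring
  -- countable additivity over the fibers
  have hiU : ∀ (g : ℤ → ℤ) (z : ℤ),
      P (⋃ x : ℤ, {ω | b ω = x ∧ c ω = g x ∧ B ω = z}) =
        ∑' x : ℤ, P {ω | b ω = x ∧ c ω = g x ∧ B ω = z} := by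
    intro g z
    refine measure_iUnion ?_ (fun x => hmeas x (g x) z)
    intro x y hxy
    simp only [Function.onFun, Set.disjoint_left]
    rintro ω ⟨h1, -, -⟩ ⟨h2, -, -⟩
    exact hxy (h1.symm.trans h2)
  -- value of each atom
  have hterm : ∀ (x y z : ℤ), (z = 0 ∨ z = 1) →
      P {ω | b ω = x ∧ c ω = y ∧ B ω = z} =
        (if 0 ≤ x ∧ x ≤ N - 1 then u else 0) * (if 1 ≤ y ∧ y ≤ N then u else 0) * (1 / 2) := by
    intro x y z hz
    rw [hIndep, hbUnif, hcUnif, hBUnif, if_pos hz]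
  -- counting lemma
  have hcount : ∀ (g : ℤ → ℤ) (F : Finset ℤ),
      (∀ x : ℤ, x ∈ F ↔ (0 ≤ x ∧ x ≤ N - 1) ∧ (1 ≤ g x ∧ g x ≤ N)) →
      (∑' x : ℤ, (if 0 ≤ x ∧ x ≤ N - 1 then u else 0) *
        (if 1 ≤ g x ∧ g x ≤ N then u else 0) * (1 / 2)) =
        (F.card : ℝ≥0∞) * (u * u * (1 / 2)) := by
    intro g F hF
    rw [tsum_eq_sum (s := F) ?_]
    · rw [Finset.sum_congr rfl (fun x hx => ?_), Finset.sum_const, nsmul_eq_mul]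
      obtain ⟨h1, h2⟩ := (hF x).mp hx
      rw [if_pos h1, if_pos h2, mul_assoc]
    · intro x hx
      rw [hF] at hx
      by_cases h1 : 0 ≤ x ∧ x ≤ N - 1
      · by_cases h2 : 1 ≤ g x ∧ g x ≤ N
        · exact absurd ⟨h1, h2⟩ hx
        · simp [h2]
      · rw [if_neg h1]; simp
  set F1 : Finset ℤ := Finset.Icc (max 0 (k - N)) (min (N - 1) (k - 1)) with hF1
  set F0 : Finset ℤ := Finset.Icc (max 0 (N + k)) (min (N - 1) (2 * N - 1 + k)) with hF0
  have hmem1 : ∀ x : ℤ, x ∈ F1 ↔ (0 ≤ x ∧ x ≤ N - 1) ∧ (1 ≤ k - x ∧ k - x ≤ N) := by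
    intro x; rw [hF1, Finset.mem_Icc]; omega
  have hmem0 : ∀ x : ℤ, x ∈ F0 ↔ (0 ≤ x ∧ x ≤ N - 1) ∧ (1 ≤ x - N + 1 - k ∧ x - N + 1 - k ≤ N) := by
    intro x; rw [hF0, Finset.mem_Icc]; omega
  have hmain : P {ω | i ω = k} = ((F1.card + F0.card : ℕ) : ℝ≥0∞) * (u * u * (1 / 2)) := by
    rw [hsplit, hset1, hset0, hiU (fun x => k - x) 1, hiU (fun x => x - N + 1 - k) 0,
      tsum_congr (fun x => hterm x (k - x) 1 (Or.inr rfl)),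
      tsum_congr (fun x => hterm x (x - N + 1 - k) 0 (Or.inl rfl)),
      hcount (fun x => k - x) F1 hmem1, hcount (fun x => x - N + 1 - k) F0 hmem0,
      ← add_mul, ← Nat.cast_add]
  have habs : |k| = max k (-k) := abs_eq_max_neg
  by_cases hk : 1 ≤ |k| ∧ |k| ≤ 2 * N - 1
  · rw [if_pos hk, hmain]
    have hcard : ((F1.card + F0.card : ℕ) : ℤ) = min |k| (2 * N - |k|) := by
      rw [hF1, hF0, Int.card_Icc, Int.card_Icc, habs]
      rw [habs] at hk
      omega
    have hNt : ((N.toNat : ℤ)) = N := Int.toNat_of_nonneg hN0.le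
    have hNreal : ((N.toNat : ℕ) : ℝ) = (N : ℝ) := by exact_mod_cast congrArg (Int.cast : ℤ → ℝ) hNt
    rw [hu, ennreal_endgame _ _ (by omega)]
    congr 1
    rw [hNreal]
    have : ((F1.card + F0.card : ℕ) : ℝ) = min ((|k| : ℤ) : ℝ) (2 * (N:ℝ) - ((|k| : ℤ) : ℝ)) := by
      have := congrArg (Int.cast : ℤ → ℝ) hcard
      push_cast at this ⊢
      rw [this]
    rw [this]
    ring
  · rw [if_neg hk, hmain]
    have h1 : F1.card = 0 := by
      rw [hF1, Int.card_Icc]; rw [habs] at hk; omega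
    have h0 : F0.card = 0 := by
      rw [hF0, Int.card_Icc]; rw [habs] at hk; omega
    rw [h1, h0]
    simp
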